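/- Let pen(k, n) = ((k(k-1)(2k-1))/12 + ((k-1)(k+1+ε))/2) log n + n log((k-1)!) with ε > 0. Then b_n := -((k₀(k₀+2)-1)/2) - pen(k₀, n)/log n + pen(⌊log n⌋, n)/log n - n log(k₀)/log n tends to +∞ as n → ∞, for any fixed k₀ ≥ 1. -/

import Mathlib

open Filter

lemma tendsto_div_log_aux : Tendsto (fun x : ℝ => x / Real.log x) atTop atTop := by
  have h0 : Tendsto (fun x : ℝ => Real.log x / x) atTop (nhds 0) := by
    simpa using Real.tendsto_pow_log_div_mul_add_atTop 1 0 1 one_ne_zero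
  have h1 : Tendsto (fun x : ℝ => Real.log x / x) atTop (nhdsWithin 0 (Set.Ioi 0)) := by
    refine tendsto_nhdsWithin_of_tendsto_nhds_of_eventually_within _ h0 ?_
    filter_upwards [eventually_gt_atTop (1:ℝ)] with x hx
    exact div_pos (Real.log_pos hx) (lt_trans one_pos hx)
  have := h1.inv_tendsto_nhdsGT_zero
  refine this.congr' ?_
  filter_upwards [eventually_gt_atTop (1:ℝ)] with x hx
  simp [Pi.inv_apply, inv_div]

/-- The DNML penalty
`pen(k,n) = (k(k-1)(2k-1)/12 + (k-1)(k+1+ε)/2) log n + n log((k-1)!)`. -/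
noncomputable def penDNML (ε : ℝ) (k n : ℕ) : ℝ :=
  ((k : ℝ) * ((k : ℝ) - 1) * (2 * (k : ℝ) - 1) / 12 +
    ((k : ℝ) - 1) * ((k : ℝ) + 1 + ε) / 2) * Real.log n +
  (n : ℝ) * Real.log (Nat.factorial (k - 1))

/-- The sequence
`b_n = -((k₀(k₀+2)-1)/2) - pen(k₀,n)/log n + pen(⌊log n⌋,n)/log n - n log k₀ / log n`
tends to `+∞`. -/
theorem penDNML_bn_tendsto_atTop (ε : ℝ) (hε : 0 < ε) (k₀ : ℕ) (hk₀ : 1 ≤ k₀) :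
    Tendsto (fun n : ℕ =>
      -(((k₀ : ℝ) * (k₀ + 2) - 1)/2) - penDNML ε k₀ n / Real.log n +
        penDNML ε (Nat.floor (Real.log n)) n / Real.log n -
        (n : ℝ) * Real.log k₀ / Real.log n) atTop atTop := by
  set A₀ : ℝ := ((k₀ : ℝ) * ((k₀ : ℝ) - 1) * (2 * (k₀ : ℝ) - 1) / 12 +
    ((k₀ : ℝ) - 1) * ((k₀ : ℝ) + 1 + ε) / 2) with hA₀
  set C : ℝ := (((k₀:ℝ) * (k₀ + 2) - 1)/2) + A₀ with hCdef
  have hdiv : Tendsto (fun n : ℕ => -C + (n:ℝ)/Real.log n) atTop atTop :=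
    tendsto_atTop_add_const_left _ _ (tendsto_div_log_aux.comp tendsto_natCast_atTop_atTop)
  refine tendsto_atTop_mono' _ ?_ hdiv
  have hev : ∀ᶠ n : ℕ in atTop, ((3*k₀.factorial + 1 : ℕ) : ℝ) ≤ Real.log n :=
    (Real.tendsto_log_atTop.comp tendsto_natCast_atTop_atTop).eventually_ge_atTop _
  filter_upwards [hev] with n hn
  set L := Real.log (n:ℝ) with hL
  have hL1 : (1:ℝ) ≤ L :=
    le_trans (by exact_mod_cast Nat.succ_le_succ (Nat.zero_le (3*k₀.factorial))) hn
  have hL0 : (0:ℝ) < L := lt_of_lt_of_le one_pos hL1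
  set m := Nat.floor L with hm
  have hmge : 3*k₀.factorial + 1 ≤ m := Nat.le_floor hn
  have hm1 : (1:ℝ) ≤ (m:ℝ) := by
    have : 1 ≤ m := by omega
    exact_mod_cast this
  have hfac : 3*k₀.factorial ≤ (m-1).factorial :=
    le_trans (Nat.self_le_factorial _) (Nat.factorial_le (by omega))
  -- log bound
  have hk0pos : 0 < k₀ := hk₀
  have hsplit : 3*k₀.factorial = 3*(k₀*(k₀-1).factorial) := by
    rw [Nat.mul_factorial_pred hk0pos.ne']
  have hlog3 : (1:ℝ) ≤ Real.log 3 := by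
    rw [Real.le_log_iff_exp_le (by norm_num)]
    exact le_trans Real.exp_one_lt_d9.le (by norm_num)
  have hkey : Real.log ((k₀-1).factorial) + Real.log k₀ + 1 ≤ Real.log ((m-1).factorial) := by
    have h1 : Real.log ((3*k₀.factorial : ℕ) : ℝ) ≤ Real.log ((m-1).factorial) :=
      Real.log_le_log (by positivity) (by exact_mod_cast hfac)
    have h2 : ((3*k₀.factorial : ℕ) : ℝ) = 3 * ((k₀:ℝ) * ((k₀-1).factorial : ℝ)) := by
      rw [hsplit]; push_cast; ring
    rw [h2, Real.log_mul (by norm_num) (by positivity),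
        Real.log_mul (by exact_mod_cast hk0pos.ne') (by positivity)] at h1
    linarith
  -- coefficient nonneg for m
  have hAm : 0 ≤ (m:ℝ) * ((m:ℝ) - 1) * (2 * (m:ℝ) - 1) / 12 +
      ((m:ℝ) - 1) * ((m:ℝ) + 1 + ε) / 2 := by
    have t1 : 0 ≤ (m:ℝ) * ((m:ℝ) - 1) * (2 * (m:ℝ) - 1) :=
      mul_nonneg (mul_nonneg (by linarith) (by linarith)) (by linarith)
    have t2 : 0 ≤ ((m:ℝ) - 1) * ((m:ℝ) + 1 + ε) :=
      mul_nonneg (by linarith) (by linarith)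
    linarith
  -- expand penDNML
  simp only [penDNML, ← hL]
  have expand : ∀ A f : ℝ, (A * L + (n:ℝ) * f) / L = A + (n:ℝ) * f / L := by
    intro A f; field_simp
  rw [expand, expand]
  have hmono : (n:ℝ) / L + (n:ℝ) * Real.log ((k₀-1).factorial) / L
      + (n:ℝ) * Real.log k₀ / L ≤ (n:ℝ) * Real.log ((m-1).factorial) / L := by
    rw [← add_div, ← add_div]
    gcongr
    nlinarith [Nat.cast_nonneg (α := ℝ) n]
  linarith
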